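/- Let M be a matroid on a finite ground set S, with ν* the nullity function of the dual matroid M* (so ν*(X) = |X| − ρ*(X) = min over bases B of M of |X ∩ B|), and let X = (X_1,...,X_n) be a family of subsets of S. Then there exists an avoiding transversal of X whose image is independent in M (an injective x : {1,...,n} → S with x_i ∉ X_i for all i and {x_1,...,x_n} independent in M) if and only if for every J ⊆ {1,...,n} we have ν*(⋂_{j∈J} X_j) + |J| ≤ ν*(S), where the intersection over the empty index set is S. -/

import Mathlib

open Matroid Set

namespace RadoAux

variable {α : Type*} [Fintype α] {M : Matroid α} {I J s t : Set α}

noncomputable def rk (M : Matroid α) (s : Set α) : ℕ :=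
  (M.exists_isBasis' s).choose.ncard

lemma rk_eq_of_basis' (hI : M.IsBasis' I s) : rk M s = I.ncard := by
  have h := (M.exists_isBasis' s).choose_spec
  have h2 := h.encard_eq_encard hI
  rw [← (toFinite _).cast_ncard_eq, ← (toFinite _).cast_ncard_eq] at h2
  exact_mod_cast h2

lemma indep_ncard_le_rk (hJ : M.Indep J) (hJs : J ⊆ s) : J.ncard ≤ rk M s := by
  obtain ⟨I, hI⟩ := M.exists_isBasis' s
  rw [rk_eq_of_basis' hI]
  by_contra hlt
  push_neg at hlt
  have hecard : I.encard < J.encard := by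
    rw [← (toFinite I).cast_ncard_eq, ← (toFinite J).cast_ncard_eq]
    exact_mod_cast hlt
  obtain ⟨e, he, hind⟩ := hI.indep.augment hJ hecard
  exact hI.insert_not_indep ⟨hJs he.1, he.2⟩ hind

lemma rk_mono (M : Matroid α) (h : s ⊆ t) : rk M s ≤ rk M t := by
  obtain ⟨I, hI⟩ := M.exists_isBasis' s
  rw [rk_eq_of_basis' hI]
  exact indep_ncard_le_rk hI.indep (hI.subset.trans h)

lemma rk_le_ncard (M : Matroid α) (s : Set α) : rk M s ≤ s.ncard := by
  obtain ⟨I, hI⟩ := M.exists_isBasis' s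
  rw [rk_eq_of_basis' hI]
  exact ncard_le_ncard hI.subset (toFinite s)

lemma indep_of_ncard_le_rk (h : s.ncard ≤ rk M s) : M.Indep s := by
  obtain ⟨I, hI⟩ := M.exists_isBasis' s
  rw [rk_eq_of_basis' hI] at h
  have : I = s := eq_of_subset_of_ncard_le hI.subset h (toFinite s)
  exact this ▸ hI.indep

lemma rk_submod (M : Matroid α) (hE : M.E = Set.univ) (s t : Set α) :
    rk M (s ∪ t) + rk M (s ∩ t) ≤ rk M s + rk M t := by
  obtain ⟨I, hI⟩ := M.exists_isBasis (s ∩ t) (by simp [hE])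
  obtain ⟨J, hJ, hJI⟩ := hI.exists_isBasis_inter_eq_of_superset
    (inter_subset_left.trans subset_union_left) (by simp [hE])
  rw [rk_eq_of_basis' hJ.isBasis', rk_eq_of_basis' hI.isBasis']
  have hJsub : J ⊆ s ∪ t := hJ.subset
  have hU : (J ∩ s) ∪ (J ∩ t) = J := by
    rw [← inter_union_distrib_left]; exact inter_eq_self_of_subset_left hJsub
  have hInt : (J ∩ s) ∩ (J ∩ t) = I := by rw [← hJI]; ext a; simp; tauto
  have hkey : (J ∩ s).ncard + (J ∩ t).ncard = J.ncard + I.ncard := by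
    rw [← ncard_union_add_ncard_inter (J ∩ s) (J ∩ t) (toFinite _) (toFinite _), hU, hInt]
  have h1 : (J ∩ s).ncard ≤ rk M s :=
    indep_ncard_le_rk (hJ.indep.subset inter_subset_left) inter_subset_right
  have h2 : (J ∩ t).ncard ≤ rk M t :=
    indep_ncard_le_rk (hJ.indep.subset inter_subset_left) inter_subset_right
  omega

lemma nustar_eq (hE : M.E = Set.univ) (νstar : Set α → ℕ)
    (hνstar : ∀ Y : Set α, IsLeast {c : ℕ | ∃ B, M.IsBase B ∧ (Y ∩ B).ncard = c} (νstar Y))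
    (Y : Set α) : νstar Y = rk M Set.univ - rk M Yᶜ := by
  have hlb : ∀ c ∈ {c : ℕ | ∃ B, M.IsBase B ∧ (Y ∩ B).ncard = c},
      rk M Set.univ - rk M Yᶜ ≤ c := by
    rintro c ⟨B, hB, rfl⟩
    have hBbasis : M.IsBasis' B Set.univ := by
      rw [← hE]; exact (isBasis_ground_iff.mpr hB).isBasis'
    have hBcard : B.ncard = rk M Set.univ := (rk_eq_of_basis' hBbasis).symm
    have h1 : (B ∩ Yᶜ).ncard ≤ rk M Yᶜ :=
      indep_ncard_le_rk (hB.indep.subset inter_subset_left) inter_subset_right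
    have h2 : (B ∩ Y).ncard + (B \ Y).ncard = B.ncard :=
      ncard_inter_add_ncard_diff_eq_ncard B Y (toFinite B)
    rw [diff_eq, inter_comm B Y, inter_comm B Yᶜ] at h2
    rw [inter_comm B Yᶜ] at h1
    omega
  have hmem : rk M Set.univ - rk M Yᶜ ∈ {c : ℕ | ∃ B, M.IsBase B ∧ (Y ∩ B).ncard = c} := by
    obtain ⟨I, hI⟩ := M.exists_isBasis Yᶜ (by simp [hE])
    obtain ⟨B, hB, hBI⟩ := hI.exists_isBasis_inter_eq_of_superset (subset_univ Yᶜ) (by simp [hE])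
    have hBbase : M.IsBase B := by rw [← isBasis_ground_iff, hE]; exact hB
    refine ⟨B, hBbase, ?_⟩
    have hBcard : B.ncard = rk M Set.univ := (rk_eq_of_basis' hB.isBasis').symm
    have hIcard : I.ncard = rk M Yᶜ := (rk_eq_of_basis' hI.isBasis').symm
    have hIB : I ⊆ B := by rw [← hBI]; exact inter_subset_left
    have hdiff : Y ∩ B = B \ I := by
      rw [← hBI]; ext a; by_cases ha : a ∈ Y <;> simp [ha]
    rw [hdiff, ncard_diff hIB (toFinite I), hBcard, hIcard]
  exact le_antisymm ((hνstar Y).2 hmem) (hlb _ (hνstar Y).1)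

lemma rado_of_small (M : Matroid α) {n : ℕ} (A : Fin n → Set α)
    (h : ∀ J : Finset (Fin n), J.card ≤ rk M (⋃ j ∈ J, A j))
    (hsmall : ∀ i, (A i).ncard ≤ 1) :
    ∃ x : Fin n → α, Function.Injective x ∧ (∀ i, x i ∈ A i) ∧ M.Indep (Set.range x) := by
  have hone : ∀ i, ∃ a, A i = {a} := by
    intro i
    have h1 := h {i}
    simp only [Finset.mem_singleton, iUnion_iUnion_eq_left, Finset.card_singleton] at h1
    have h2 := rk_le_ncard M (A i)
    exact ncard_eq_one.mp (le_antisymm (hsmall i) (by omega))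
  choose x hx using hone
  have hinj : Function.Injective x := by
    intro i j hij
    by_contra hne
    have h2 := h {i, j}
    have hcard : ({i, j} : Finset (Fin n)).card = 2 := Finset.card_pair hne
    have hu : (⋃ k ∈ ({i, j} : Finset (Fin n)), A k) = {x i} := by
      ext c
      simp only [Finset.mem_insert, Finset.mem_singleton, mem_iUnion, exists_prop]
      constructor
      · rintro ⟨k, hk | hk, hc⟩
        · rw [hk] at hc; rwa [hx i] at hc
        · rw [hk] at hc; rw [hx j, ← hij] at hc; exact hc
      · rintro hc; exact ⟨i, Or.inl rfl, by rwa [hx i]⟩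
    have h3 := rk_le_ncard M ({x i} : Set α)
    rw [hu, hcard] at h2
    simp [ncard_singleton] at h3
    omega
  refine ⟨x, hinj, fun i => by rw [hx i]; exact rfl, ?_⟩
  apply indep_of_ncard_le_rk
  have hr : Set.range x = ⋃ j ∈ (Finset.univ : Finset (Fin n)), A j := by
    ext c
    simp only [mem_range, mem_iUnion, Finset.mem_univ, exists_prop, true_and]
    constructor
    · rintro ⟨j, rfl⟩; exact ⟨j, by rw [hx j]; exact rfl⟩
    · rintro ⟨j, hc⟩; rw [hx j] at hc; exact ⟨j, hc.symm⟩
  have h3 := h Finset.univ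
  rw [← hr, Finset.card_univ, Fintype.card_fin] at h3
  have h4 : (Set.range x).ncard ≤ n := by
    rw [← image_univ]
    calc (x '' Set.univ).ncard ≤ (Set.univ : Set (Fin n)).ncard :=
          ncard_image_le (toFinite _)
      _ = n := by rw [ncard_univ, Nat.card_eq_fintype_card, Fintype.card_fin]
  omega

lemma shrink_step (M : Matroid α) {n : ℕ} (A : Fin n → Set α)
    (h : ∀ J : Finset (Fin n), J.card ≤ rk M (⋃ j ∈ J, A j)) {i : Fin n} {z : α}
    (hfail : ¬ ∀ J : Finset (Fin n),
      J.card ≤ rk M (⋃ j ∈ J, Function.update A i (A i \ {z}) j)) :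
    ∃ K : Finset (Fin n), i ∉ K ∧ rk M ((A i \ {z}) ∪ ⋃ j ∈ K, A j) ≤ K.card := by
  push_neg at hfail
  obtain ⟨J, hJ⟩ := hfail
  have hiJ : i ∈ J := by
    by_contra hiJ
    have he : (⋃ j ∈ J, Function.update A i (A i \ {z}) j) = ⋃ j ∈ J, A j := by
      apply iUnion₂_congr
      intro j hj
      rw [Function.update_of_ne (by rintro rfl; exact hiJ hj)]
    rw [he] at hJ
    exact absurd (h J) (by omega)
  refine ⟨J.erase i, Finset.notMem_erase i J, ?_⟩
  have hcard : J.card = (J.erase i).card + 1 := by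
    rw [Finset.card_erase_of_mem hiJ]
    have := Finset.card_pos.mpr ⟨i, hiJ⟩
    omega
  have hu : (⋃ j ∈ J, Function.update A i (A i \ {z}) j)
      = (A i \ {z}) ∪ ⋃ j ∈ J.erase i, A j := by
    conv_lhs => rw [← Finset.insert_erase hiJ]
    rw [Finset.set_biUnion_insert]
    congr 1
    · rw [Function.update_self]
    · apply iUnion₂_congr
      intro j hj
      rw [Function.update_of_ne (Finset.ne_of_mem_erase hj)]
  rw [hu, hcard] at hJ
  omega

theorem rado (M : Matroid α) (hE : M.E = Set.univ) {n : ℕ} (N : ℕ) (A : Fin n → Set α)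
    (hN : ∑ i, (A i).ncard ≤ N)
    (h : ∀ J : Finset (Fin n), J.card ≤ rk M (⋃ j ∈ J, A j)) :
    ∃ x : Fin n → α, Function.Injective x ∧ (∀ i, x i ∈ A i) ∧ M.Indep (Set.range x) := by
  induction N generalizing A with
  | zero =>
    refine rado_of_small M A h (fun i => ?_)
    have : (A i).ncard ≤ ∑ j, (A j).ncard :=
      Finset.single_le_sum (f := fun j => (A j).ncard) (fun j _ => Nat.zero_le _)
        (Finset.mem_univ i)
    omega
  | succ N ih =>
    by_cases hsmall : ∀ i, (A i).ncard ≤ 1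
    · exact rado_of_small M A h hsmall
    push_neg at hsmall
    obtain ⟨i, hi⟩ := hsmall
    obtain ⟨a, b, ha, hb, hab⟩ := (one_lt_ncard_iff (toFinite (A i))).mp hi
    have hkey : ∃ z ∈ A i, ∀ J : Finset (Fin n),
        J.card ≤ rk M (⋃ j ∈ J, Function.update A i (A i \ {z}) j) := by
      by_contra hcon
      push_neg at hcon
      obtain ⟨Kx, hKxi, hKx⟩ := shrink_step M A h (i := i) (z := a) (by
        intro hall
        obtain ⟨J, hJ1⟩ := hcon a ha
        exact absurd (hall J) (by omega))
      obtain ⟨Ky, hKyi, hKy⟩ := shrink_step M A h (i := i) (z := b) (by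
        intro hall
        obtain ⟨J, hJ1⟩ := hcon b hb
        exact absurd (hall J) (by omega))
      set s := (A i \ {a}) ∪ ⋃ j ∈ Kx, A j with hs
      set t := (A i \ {b}) ∪ ⋃ j ∈ Ky, A j with ht
      have hsub := rk_submod M hE s t
      have hunion : s ∪ t = ⋃ j ∈ insert i (Kx ∪ Ky), A j := by
        rw [Finset.set_biUnion_insert, Finset.set_biUnion_union]
        ext c
        simp only [hs, ht, mem_union, mem_diff, mem_singleton_iff]
        constructor
        · rintro ((⟨hc, _⟩ | hc) | (⟨hc, _⟩ | hc)) <;> tauto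
        · rintro (hc | hc | hc)
          · by_cases hca : c = a
            · subst hca
              exact Or.inr (Or.inl ⟨hc, fun hcb => hab (hcb ▸ rfl)⟩)
            · exact Or.inl (Or.inl ⟨hc, hca⟩)
          · tauto
          · tauto
      have hiKK : i ∉ Kx ∪ Ky := by
        simp only [Finset.mem_union]
        tauto
      have h1 : (Kx ∪ Ky).card + 1 ≤ rk M (s ∪ t) := by
        rw [hunion]
        have := h (insert i (Kx ∪ Ky))
        rwa [Finset.card_insert_of_notMem hiKK] at this
      have h2 : (Kx ∩ Ky).card ≤ rk M (s ∩ t) := by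
        refine le_trans (h (Kx ∩ Ky)) (rk_mono M ?_)
        intro c hc
        simp only [mem_iUnion, exists_prop] at hc
        obtain ⟨j, hj, hjc⟩ := hc
        rw [Finset.mem_inter] at hj
        constructor
        · exact Or.inr (mem_iUnion₂.mpr ⟨j, hj.1, hjc⟩)
        · exact Or.inr (mem_iUnion₂.mpr ⟨j, hj.2, hjc⟩)
      have hcards := Finset.card_union_add_card_inter Kx Ky
      omega
    obtain ⟨z, hz, hcond'⟩ := hkey
    have hsum' : ∑ j, (Function.update A i (A i \ {z}) j).ncard ≤ N := by
      have he : ∀ j, (Function.update A i (A i \ {z}) j).ncard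
          = Function.update (fun j => (A j).ncard) i ((A i \ {z}).ncard) j := by
        intro j
        by_cases hj : j = i
        · subst hj; rw [Function.update_self, Function.update_self]
        · rw [Function.update_of_ne hj, Function.update_of_ne hj]
      rw [Finset.sum_congr rfl (fun j _ => he j),
        Finset.sum_update_of_mem (Finset.mem_univ i)]
      have hdiff : (A i \ {z}).ncard = (A i).ncard - 1 :=
        ncard_diff_singleton_of_mem hz
      have hsum := Finset.add_sum_erase Finset.univ (fun j => (A j).ncard) (Finset.mem_univ i)
      simp only [Finset.erase_eq] at hsum
      omega
    obtain ⟨x, hinj, hmem, hind⟩ := ih _ hsum' hcond'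
    refine ⟨x, hinj, fun j => ?_, hind⟩
    have := hmem j
    by_cases hj : j = i
    · subst hj
      rw [Function.update_self] at this
      exact this.1
    · rwa [Function.update_of_ne hj] at this

end RadoAux

/-- **Rado's theorem, avoidance form.** Let `M` be a matroid on the finite ground set `α`,
and let `ν*` be the nullity function of the dual matroid, characterized as
`ν*(Y) = min {|Y ∩ B| : B a base of M}`.  Then the family `X = (X 1, …, X n)` has an
avoiding transversal whose image is independent in `M` iff for every `J ⊆ {1,…,n}` we have
`ν*(⋂_{j ∈ J} X j) + |J| ≤ ν*(S)` (the intersection over `J = ∅` being all of `S`). -/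
theorem avoiding_rado {α : Type*} [Fintype α]
    (M : Matroid α) (hE : M.E = Set.univ)
    (νstar : Set α → ℕ)
    (hνstar : ∀ Y : Set α, IsLeast {c : ℕ | ∃ B, M.IsBase B ∧ (Y ∩ B).ncard = c} (νstar Y))
    (n : ℕ) (X : Fin n → Set α) :
    (∃ x : Fin n → α, Function.Injective x ∧ (∀ i, x i ∉ X i) ∧ M.Indep (Set.range x)) ↔
    (∀ J : Finset (Fin n), νstar (⋂ j ∈ J, X j) + J.card ≤ νstar Set.univ) := by
  classical
  set A : Fin n → Set α := fun i => (X i)ᶜ with hA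
  have hcompl : ∀ J : Finset (Fin n), (⋂ j ∈ J, X j)ᶜ = ⋃ j ∈ J, A j := by
    intro J
    simp [hA, Set.compl_iInter]
  have hν := RadoAux.nustar_eq hE νstar hνstar
  have hνuniv : νstar Set.univ = RadoAux.rk M Set.univ := by
    have h0 : RadoAux.rk M (∅ : Set α) = 0 :=
      Nat.le_zero.mp (le_trans (RadoAux.rk_le_ncard M ∅) (by simp))
    rw [hν, Set.compl_univ, h0]
    omega
  have hcond : (∀ J : Finset (Fin n), νstar (⋂ j ∈ J, X j) + J.card ≤ νstar Set.univ)
      ↔ ∀ J : Finset (Fin n), J.card ≤ RadoAux.rk M (⋃ j ∈ J, A j) := by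
    apply forall_congr'
    intro J
    rw [hν, hcompl J, hνuniv]
    have hle : RadoAux.rk M (⋃ j ∈ J, A j) ≤ RadoAux.rk M Set.univ :=
      RadoAux.rk_mono M (Set.subset_univ _)
    omega
  rw [hcond]
  constructor
  · rintro ⟨x, hinj, havoid, hind⟩ J
    have himg : (x '' ↑J).ncard = J.card := by
      rw [Set.ncard_image_of_injective _ hinj, Set.ncard_coe_finset]
    rw [← himg]
    refine RadoAux.indep_ncard_le_rk (hind.subset (Set.image_subset_range x ↑J)) ?_
    rintro c ⟨j, hj, rfl⟩
    exact Set.mem_iUnion₂.mpr ⟨j, hj, havoid j⟩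
  · intro hJ
    obtain ⟨x, hinj, hmem, hind⟩ := RadoAux.rado M hE (∑ i, (A i).ncard) A le_rfl hJ
    exact ⟨x, hinj, fun i => hmem i, hind⟩
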